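/- Let s be a finite shift-bounded binary word. If a a* is a prefix of s for some non-empty word a (a* the bitwise complement of a), then s = a a*. -/
import Mathlib


open Filter MeasureTheory

/-- Left shift by `k` on infinite binary sequences. -/
def shiftSeq (k : ℕ) (x : ℕ → Bool) : ℕ → Bool := fun n => x (n + k)

/-- Strict lexicographic order on infinite binary sequences (`false < true`). -/
def seqLt (a b : ℕ → Bool) : Prop :=
  ∃ n, (∀ k < n, a k = b k) ∧ a n = false ∧ b n = true

def seqLe (a b : ℕ → Bool) : Prop := a = b ∨ seqLt a b

/-- A finite word viewed as an infinite sequence (padded with zeros). -/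
def wordSeq (w : List Bool) : ℕ → Bool := fun n => w.getD n false

/-- Bitwise complement of an infinite sequence. -/
def complSeq (a : ℕ → Bool) : ℕ → Bool := fun n => ! a n

/-- `F(c) = {x : c' ≥ σⁿ(x) ≥ c for all n ≥ 0}` for an infinite bound `c`. -/
def Fset (c : ℕ → Bool) : Set (ℕ → Bool) :=
  {x | ∀ n : ℕ, seqLe c (shiftSeq n x) ∧ seqLe (shiftSeq n x) (complSeq c)}

/-- The real number in `[0,1]` with binary expansion `x`. -/
noncomputable def seqVal (x : ℕ → Bool) : ℝ :=
  ∑' n : ℕ, (cond (x n) (1 : ℝ) 0) / 2 ^ (n + 1)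

/-- The periodic infinite sequence `w^∞`. -/
def perSeq (w : List Bool) : ℕ → Bool := fun n => w.getD (n % w.length) false

/-- `s̃`: the word `s` with its last symbol inverted. -/
def flipLast (s : List Bool) : List Bool :=
  s.dropLast ++ [! s.getD (s.length - 1) false]

/-- `f(s) = s̃ s'` where `s'` is the bitwise complement of `s`. -/
def fW (s : List Bool) : List Bool := flipLast s ++ s.map (fun b => !b)

/-- A finite word `s` is shift-bounded: `s' > σⁿ(s) > s` for `0 < n < |s|`,
comparisons via the embedding of finite words into infinite sequences
(`s` padded with zeros, `s'` is the complement of the padded sequence);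
by convention `[false]` is excluded. -/
def ShiftBounded (s : List Bool) : Prop :=
  s ≠ [false] ∧ ∀ n, 0 < n → n < s.length →
    seqLt (wordSeq s) (wordSeq (s.drop n)) ∧
    seqLt (wordSeq (s.drop n)) (complSeq (wordSeq s))

/-- Prepend a finite word to an infinite sequence. -/
def appendSeq (w : List Bool) (t : ℕ → Bool) : ℕ → Bool :=
  fun n => if n < w.length then w.getD n false else t (n - w.length)

/-- `w^k`: the word `w` repeated `k` times. -/
def repWord (k : ℕ) (w : List Bool) : List Bool :=
  (List.replicate k w).foldr (· ++ ·) []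

/-- The infinite concatenation of the finite words `g 0, g 1, g 2, …`
(assuming all are nonempty, the `n`-th symbol is obtained from the first
`n+1` blocks). -/
def concatSeq (g : ℕ → List Bool) : ℕ → Bool :=
  fun n => (((List.range (n + 1)).map g).foldr (· ++ ·) []).getD n false

lemma getD_append_lt (w v : List Bool) (n : ℕ) (h : n < w.length) :
    (w ++ v).getD n false = w.getD n false := by
  simp [List.getD_eq_getElem?_getD, List.getElem?_append, h]

lemma getD_append_ge (w v : List Bool) (n : ℕ) (h : w.length ≤ n) :
    (w ++ v).getD n false = v.getD (n - w.length) false := by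
  simp [List.getD_eq_getElem?_getD, List.getElem?_append, Nat.not_lt.mpr h]

lemma getD_map_not (w : List Bool) (n : ℕ) (h : n < w.length) :
    (w.map (fun b => !b)).getD n false = ! w.getD n false := by
  simp [List.getD_eq_getElem?_getD, List.getElem?_eq_getElem, h]

lemma appendSeq_lt' (w : List Bool) (x : ℕ → Bool) (n : ℕ) (h : n < w.length) :
    appendSeq w x n = w.getD n false := by simp [appendSeq, h]

lemma appendSeq_ge' (w : List Bool) (x : ℕ → Bool) (n : ℕ) (h : w.length ≤ n) :
    appendSeq w x n = x (n - w.length) := by simp [appendSeq, Nat.not_lt.mpr h]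

lemma appendSeq_append (w v : List Bool) (x : ℕ → Bool) :
    appendSeq (w ++ v) x = appendSeq w (appendSeq v x) := by
  funext n
  rcases lt_or_ge n w.length with h | h
  · rw [appendSeq_lt' _ _ _ (by simp; omega), appendSeq_lt' _ _ _ h,
      getD_append_lt _ _ _ h]
  · rw [appendSeq_ge' w _ _ h]
    rcases lt_or_ge n (w.length + v.length) with h2 | h2
    · rw [appendSeq_lt' _ _ _ (by simp; omega), appendSeq_lt' _ _ _ (by omega),
        getD_append_ge _ _ _ h]
    · rw [appendSeq_ge' _ _ _ (by simp; omega), appendSeq_ge' _ _ _ (by omega)]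
      congr 1; simp; omega

lemma complSeq_appendSeq (w : List Bool) (x : ℕ → Bool) :
    complSeq (appendSeq w x) = appendSeq (w.map (fun b => !b)) (complSeq x) := by
  funext n
  rcases lt_or_ge n w.length with h | h
  · rw [complSeq, appendSeq_lt' _ _ _ h, appendSeq_lt' _ _ _ (by simpa using h),
      getD_map_not _ _ h]
  · rw [complSeq, appendSeq_ge' _ _ _ h, appendSeq_ge' _ _ _ (by simpa using h)]
    simp [complSeq]

lemma wordSeq_append (w t : List Bool) :
    wordSeq (w ++ t) = appendSeq w (wordSeq t) := by
  funext n
  rcases lt_or_ge n w.length with h | h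
  · rw [wordSeq, getD_append_lt _ _ _ h, appendSeq_lt' _ _ _ h]
  · rw [wordSeq, getD_append_ge _ _ _ h, appendSeq_ge' _ _ _ h]; rfl

lemma seqLt_cancel (w : List Bool) (p q : ℕ → Bool)
    (h : seqLt (appendSeq w p) (appendSeq w q)) : seqLt p q := by
  obtain ⟨n, hk, hf, ht⟩ := h
  have hn : w.length ≤ n := by
    by_contra hn
    rw [appendSeq_lt' _ _ _ (Nat.not_le.mp hn)] at hf ht
    rw [hf] at ht; exact Bool.false_ne_true ht
  refine ⟨n - w.length, fun k hk' => ?_, ?_, ?_⟩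
  · have := hk (k + w.length) (by omega)
    rwa [appendSeq_ge' _ _ _ (by omega), appendSeq_ge' _ _ _ (by omega),
      Nat.add_sub_cancel] at this
  · rwa [appendSeq_ge' _ _ _ hn] at hf
  · rwa [appendSeq_ge' _ _ _ hn] at ht

lemma map_not_not (w : List Bool) :
    (w.map (fun b => !b)).map (fun b => !b) = w := by
  rw [List.map_map]
  simp [Function.comp_def]

/-- The key pair of inequalities. -/
def sbPair (u : List Bool) (x : ℕ → Bool) : Prop :=
  seqLt (appendSeq (u ++ u.map (fun b => !b)) x) x ∧
  seqLt x (appendSeq u (complSeq x))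

lemma sbPair_step (u : List Bool) (x : ℕ → Bool) (h : sbPair u x) :
    (∀ i < u.length, x i = u.getD i false) ∧
    sbPair (u.map (fun b => !b)) (shiftSeq u.length x) := by
  obtain ⟨h1, h2⟩ := h
  obtain ⟨n2, hk2, hf2, ht2⟩ := id h1
  obtain ⟨n1, hk1, hf1, ht1⟩ := id h2
  have hlen : (u ++ u.map (fun b => !b)).length = u.length + u.length := by simp
  have hn1 : u.length ≤ n1 := by
    by_contra hc
    push_neg at hc
    rw [appendSeq_lt' _ _ _ hc] at ht1
    rcases lt_trichotomy n1 n2 with h' | h' | h'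
    · have := hk2 n1 h'
      rw [appendSeq_lt' _ _ _ (by omega), getD_append_lt _ _ _ hc] at this
      rw [ht1, hf1] at this
      simp at this
    · subst h'
      rw [appendSeq_lt' _ _ _ (by omega), getD_append_lt _ _ _ hc, ht1] at hf2
      simp at hf2
    · have h3 := hk1 n2 h'
      rw [appendSeq_lt' _ _ _ (by omega), getD_append_lt _ _ _ (by omega)] at hf2
      rw [appendSeq_lt' _ _ _ (by omega), ht2, hf2] at h3
      simp at h3
  have hn2 : u.length ≤ n2 := by
    by_contra hc
    push_neg at hc
    rw [appendSeq_lt' _ _ _ (by omega), getD_append_lt _ _ _ hc] at hf2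
    have h3 := hk1 n2 (by omega)
    rw [appendSeq_lt' _ _ _ hc, hf2, ht2] at h3
    simp at h3
  have hstart : ∀ i < u.length, x i = u.getD i false := by
    intro i hi
    have := hk1 i (by omega)
    rwa [appendSeq_lt' _ _ _ hi] at this
  have hx : x = appendSeq u (shiftSeq u.length x) := by
    funext n
    rcases lt_or_ge n u.length with h | h
    · rw [appendSeq_lt' _ _ _ h, hstart n h]
    · rw [appendSeq_ge' _ _ _ h, shiftSeq]
      congr 1; omega
  have e1 : appendSeq (u ++ u.map (fun b => !b)) (appendSeq u (shiftSeq u.length x))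
      = appendSeq u (appendSeq (u.map (fun b => !b) ++ u) (shiftSeq u.length x)) := by
    rw [appendSeq_append, appendSeq_append]
  rw [hx] at h1 h2
  refine ⟨hstart, ?_, ?_⟩
  · -- first component of the new pair
    rw [e1] at h1
    have := seqLt_cancel u _ _ h1
    rwa [map_not_not]
  · -- second component of the new pair
    rw [complSeq_appendSeq] at h2
    exact seqLt_cancel u _ _ h2

lemma sbPair_iter (u : List Bool) (x : ℕ → Bool) (h : sbPair u x) (m : ℕ) :
    sbPair (if Even m then u else u.map (fun b => !b)) (shiftSeq (u.length * m) x) := by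
  induction m with
  | zero =>
    simp only [Nat.mul_zero, if_pos (Even.zero)]
    have : shiftSeq 0 x = x := by funext n; simp [shiftSeq]
    rwa [this]
  | succ m ih =>
    have hstep := (sbPair_step _ _ ih).2
    have hlen : (if Even m then u else u.map (fun b => !b)).length = u.length := by
      split <;> simp
    rw [hlen] at hstep
    have hsh : shiftSeq u.length (shiftSeq (u.length * m) x)
        = shiftSeq (u.length * (m + 1)) x := by
      funext n; simp [shiftSeq]; ring_nf
    rw [hsh] at hstep
    have hword : (if Even m then u else u.map (fun b => !b)).map (fun b => !b)
        = (if Even (m + 1) then u else u.map (fun b => !b)) := by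
      by_cases he : Even m
      · rw [if_pos he, if_neg (by simp [Nat.even_add_one, he])]
      · rw [if_neg he, map_not_not, if_pos (by simp [Nat.even_add_one, he])]
    rwa [hword] at hstep

theorem stmt4 (s a : List Bool) (hs : ShiftBounded s) (ha : a ≠ [])
    (hpre : (a ++ a.map (fun b => !b)) <+: s) :
    s = a ++ a.map (fun b => !b) := by
  obtain ⟨t, ht⟩ := hpre
  by_cases htnil : t = []
  · rw [← ht, htnil, List.append_nil]
  · exfalso
    have ha' : 0 < a.length := List.length_pos_iff.mpr ha
    have ht' : 0 < t.length := List.length_pos_iff.mpr htnil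
    have hslen : s.length = a.length + a.length + t.length := by
      rw [← ht]; simp only [List.length_append, List.length_map]
    have hsplit : s = a ++ (a.map (fun b => !b) ++ t) := by
      rw [← ht, List.append_assoc]
    -- Pair a (wordSeq t)
    have hP : sbPair a (wordSeq t) := by
      constructor
      · have h1 := (hs.2 (a ++ a.map (fun b => !b)).length
          (by simp; omega) (by simp only [List.length_append, List.length_map, hslen]; omega)).1
        rw [← ht, List.drop_left, wordSeq_append] at h1
        exact h1
      · have ecompl : complSeq (wordSeq s)
            = appendSeq (a.map (fun b => !b)) (appendSeq a (complSeq (wordSeq t))) := by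
          rw [hsplit, wordSeq_append, wordSeq_append, complSeq_appendSeq,
            complSeq_appendSeq, map_not_not]
        have edrop : s.drop a.length = a.map (fun b => !b) ++ t := by
          rw [hsplit, List.drop_left]
        have h2 := (hs.2 a.length (by omega) (by omega)).2
        rw [edrop, wordSeq_append, ecompl] at h2
        exact seqLt_cancel _ _ _ h2
    have key : ∀ m, wordSeq t (a.length * m)
        = (if Even m then a else a.map (fun b => !b)).getD 0 false := by
      intro m
      have := (sbPair_step _ _ (sbPair_iter a (wordSeq t) hP m)).1 0
        (by split <;> simpa using ha')
      simpa [shiftSeq] using this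
    have hzero : ∀ n, t.length ≤ n → wordSeq t n = false := by
      intro n hn
      rw [wordSeq, List.getD_eq_default _ _ hn]
    rcases Bool.eq_false_or_eq_true (a.getD 0 false) with hb | hb
    · -- head of a is true; use even m
      have h1 := key (2 * t.length)
      rw [if_pos (even_two_mul _), hb, hzero _ (by nlinarith)] at h1
      exact Bool.false_ne_true h1
    · -- head of a is false, so head of a' is true; use odd m
      have h1 := key (2 * t.length + 1)
      rw [if_neg (by simp [Nat.even_add_one, parity_simps]), getD_map_not _ _ ha', hb,
        hzero _ (by nlinarith)] at h1
      exact Bool.false_ne_true (by simpa using h1)
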